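/- Let k be a field of characteristic 0. For a power series c(s) ∈ 1 + s²k[[s]], define b_c(x₀,x₁) = c(x₀)c(x₁)/c(x₀+x₁) ∈ k[[x₀,x₁]]^×. Then the set B(k) = { b_c : c ∈ 1 + s²k[[s]] } is a subgroup of the group of units of k[[x₀,x₁]] (under multiplication), and the map c ↦ b_c is injective: if b_c = b_{c'} with c, c' ∈ 1 + s²k[[s]], then c = c'. -/

import Mathlib

set_option linter.unusedSectionVars false
set_option linter.unusedVariables false


/- STATEMENT 10: for c ∈ 1 + s²k[[s]] let b_c(x₀,x₁) = c(x₀)c(x₁)/c(x₀+x₁) in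
k[[x₀,x₁]].  The set B(k) = {b_c} is a subgroup of the units of k[[x₀,x₁]] and
c ↦ b_c is injective. -/

noncomputable section

variable (k : Type) [Field k] [CharZero k]

/-- `c ∈ 1 + s²k[[s]]`. -/
def GoodGamma (c : PowerSeries k) : Prop :=
  PowerSeries.constantCoeff (R := k) c = 1 ∧ PowerSeries.coeff (R := k) 1 c = 0

/-- `c(x₀)` resp. `c(x₁)` in `k[[x₀,x₁]]`. -/
def substX (j : Fin 2) (c : PowerSeries k) : MvPowerSeries (Fin 2) k :=
  fun d => if d (1 - j) = 0 then PowerSeries.coeff (R := k) (d j) c else 0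

/-- `c(x₀ + x₁)` in `k[[x₀,x₁]]`. -/
def substAdd (c : PowerSeries k) : MvPowerSeries (Fin 2) k :=
  fun d => ((d 0 + d 1).choose (d 0) : k) * PowerSeries.coeff (R := k) (d 0 + d 1) c

/-- `b_c(x₀,x₁) = c(x₀)c(x₁)/c(x₀+x₁)`. -/
def bC (c : PowerSeries k) : MvPowerSeries (Fin 2) k :=
  substX k 0 c * substX k 1 c * (substAdd k c)⁻¹

/-- `B(k)`. -/
def BSet : Set (MvPowerSeries (Fin 2) k) :=
  {b | ∃ c : PowerSeries k, GoodGamma k c ∧ b = bC k c}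

open Finset
namespace Aux
variable {k}

/-- pack two naturals into `Fin 2 →₀ ℕ` -/
def f2 (a b : ℕ) : Fin 2 →₀ ℕ := Finsupp.single 0 a + Finsupp.single 1 b

@[simp] lemma f2_apply0 (a b : ℕ) : f2 a b 0 = a := by
  simp [f2, Finsupp.single_apply]

@[simp] lemma f2_apply1 (a b : ℕ) : f2 a b 1 = b := by
  simp [f2, Finsupp.single_apply]

lemma f2_eta (d : Fin 2 →₀ ℕ) : f2 (d 0) (d 1) = d := by
  ext i; fin_cases i <;> simp

lemma f2_add (a b a' b' : ℕ) : f2 a b + f2 a' b' = f2 (a + a') (b + b') := by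
  ext i; fin_cases i <;> simp

lemma exists_f2 (d : Fin 2 →₀ ℕ) : ∃ a b, d = f2 a b := ⟨d 0, d 1, (f2_eta d).symm⟩

@[simp] lemma f2_eq_zero_iff (a b : ℕ) : f2 a b = 0 ↔ a = 0 ∧ b = 0 := by
  constructor
  · intro h
    constructor
    · rw [← f2_apply0 a b, h]; rfl
    · rw [← f2_apply1 a b, h]; rfl
  · rintro ⟨rfl, rfl⟩; ext i; fin_cases i <;> simp

lemma coeff_mul_fin2 (f g : MvPowerSeries (Fin 2) k) (a b : ℕ) :
    (f * g) (f2 a b) = ∑ x ∈ antidiagonal a ×ˢ antidiagonal b,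
      f (f2 x.1.1 x.2.1) * g (f2 x.1.2 x.2.2) := by
  have : (f * g) (f2 a b) = MvPowerSeries.coeff (R := k) (f2 a b) (f * g) := rfl
  rw [this, MvPowerSeries.coeff_mul]
  refine Finset.sum_nbij' (fun x => ((x.1 0, x.2 0), (x.1 1, x.2 1)))
    (fun y => (f2 y.1.1 y.2.1, f2 y.1.2 y.2.2)) ?_ ?_ ?_ ?_ ?_
  · rintro ⟨p, q⟩ h
    rw [Finset.HasAntidiagonal.mem_antidiagonal] at h
    simp only [mem_product, Finset.HasAntidiagonal.mem_antidiagonal]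
    constructor
    · have := congrArg (fun z => z 0) h; simpa using this
    · have := congrArg (fun z => z 1) h; simpa using this
  · rintro ⟨⟨pa, pb⟩, ⟨qa, qb⟩⟩ h
    simp only [mem_product, Finset.HasAntidiagonal.mem_antidiagonal] at h
    rw [Finset.HasAntidiagonal.mem_antidiagonal, f2_add, h.1, h.2]
  · rintro ⟨p, q⟩ h
    simp [f2_eta]
  · rintro ⟨⟨pa, pb⟩, ⟨qa, qb⟩⟩ h
    simp
  · rintro ⟨p, q⟩ h
    simp only [f2_eta]; rfl

@[simp] lemma substX0_apply (c : PowerSeries k) (a b : ℕ) :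
    substX k 0 c (f2 a b) = if b = 0 then PowerSeries.coeff (R := k) a c else 0 := by
  show (if f2 a b (1 - 0) = 0 then PowerSeries.coeff (R := k) (f2 a b 0) c else 0) = _
  norm_num

@[simp] lemma substX1_apply (c : PowerSeries k) (a b : ℕ) :
    substX k 1 c (f2 a b) = if a = 0 then PowerSeries.coeff (R := k) b c else 0 := by
  show (if f2 a b (1 - 1) = 0 then PowerSeries.coeff (R := k) (f2 a b 1) c else 0) = _
  norm_num

@[simp] lemma substAdd_apply (c : PowerSeries k) (a b : ℕ) :
    substAdd k c (f2 a b) = ((a + b).choose a : k) * PowerSeries.coeff (R := k) (a + b) c := by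
  show ((f2 a b 0 + f2 a b 1).choose (f2 a b 0) : k) * _ = _
  norm_num

lemma one_apply (d : Fin 2 →₀ ℕ) : (1 : MvPowerSeries (Fin 2) k) d = if d = 0 then 1 else 0 :=
  MvPowerSeries.coeff_one d

lemma substX0_one : substX k 0 (1 : PowerSeries k) = 1 := by
  funext d
  obtain ⟨a, b, rfl⟩ := exists_f2 d
  rw [substX0_apply, one_apply]
  by_cases ha : a = 0 <;> by_cases hb : b = 0 <;>
    simp [ha, hb, PowerSeries.coeff_one]

lemma substX1_one : substX k 1 (1 : PowerSeries k) = 1 := by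
  funext d
  obtain ⟨a, b, rfl⟩ := exists_f2 d
  rw [substX1_apply, one_apply]
  by_cases ha : a = 0 <;> by_cases hb : b = 0 <;>
    simp [ha, hb, PowerSeries.coeff_one]

lemma substAdd_one : substAdd k (1 : PowerSeries k) = 1 := by
  funext d
  obtain ⟨a, b, rfl⟩ := exists_f2 d
  rw [substAdd_apply, one_apply]
  by_cases ha : a = 0 <;> by_cases hb : b = 0 <;>
    simp [ha, hb, PowerSeries.coeff_one, Nat.add_eq_zero]

lemma substX0_mul (c c' : PowerSeries k) :
    substX k 0 (c * c') = substX k 0 c * substX k 0 c' := by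
  funext d
  obtain ⟨a, b, rfl⟩ := exists_f2 d
  rw [coeff_mul_fin2, substX0_apply]
  by_cases hb : b = 0
  · subst hb
    rw [Finset.sum_product]
    simp [PowerSeries.coeff_mul]
  · rw [if_neg hb]
    refine (Finset.sum_eq_zero ?_).symm
    rintro ⟨⟨pa, pb⟩, ⟨qa, qb⟩⟩ hx
    simp only [Finset.mem_product, Finset.HasAntidiagonal.mem_antidiagonal] at hx
    simp only [substX0_apply]
    by_cases hqa : qa = 0
    · have hqb : qb ≠ 0 := by omega
      rw [if_neg hqb, mul_zero]
    · rw [if_neg hqa, zero_mul]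

lemma substX1_mul (c c' : PowerSeries k) :
    substX k 1 (c * c') = substX k 1 c * substX k 1 c' := by
  funext d
  obtain ⟨a, b, rfl⟩ := exists_f2 d
  rw [coeff_mul_fin2, substX1_apply]
  by_cases ha : a = 0
  · subst ha
    rw [Finset.sum_product_right]
    simp [PowerSeries.coeff_mul]
  · rw [if_neg ha]
    refine (Finset.sum_eq_zero ?_).symm
    rintro ⟨⟨pa, pb⟩, ⟨qa, qb⟩⟩ hx
    simp only [Finset.mem_product, Finset.HasAntidiagonal.mem_antidiagonal] at hx
    simp only [substX1_apply]
    by_cases hpa : pa = 0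
    · have hpb : pb ≠ 0 := by omega
      rw [if_neg hpb, mul_zero]
    · rw [if_neg hpa, zero_mul]

lemma substAdd_mul (c c' : PowerSeries k) :
    substAdd k (c * c') = substAdd k c * substAdd k c' := by
  funext d
  obtain ⟨a, b, rfl⟩ := exists_f2 d
  rw [coeff_mul_fin2, substAdd_apply, PowerSeries.coeff_mul, Finset.mul_sum]
  have LHS : ∑ mn ∈ antidiagonal (a + b),
      ((a + b).choose a : k) * (PowerSeries.coeff (R := k) mn.1 c * PowerSeries.coeff (R := k) mn.2 c') =
      ∑ y ∈ (antidiagonal (a + b) ×ˢ antidiagonal a).filter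
        (fun y => y.2.1 ≤ y.1.1 ∧ y.2.2 ≤ y.1.2),
      ((y.1.1.choose y.2.1 : k) * (y.1.2.choose y.2.2 : k)) *
        (PowerSeries.coeff (R := k) y.1.1 c * PowerSeries.coeff (R := k) y.1.2 c') := by
    rw [Finset.sum_filter_of_ne]
    · rw [Finset.sum_product]
      refine Finset.sum_congr rfl ?_
      rintro ⟨m, n⟩ hmn
      rw [Finset.HasAntidiagonal.mem_antidiagonal] at hmn
      dsimp only
      dsimp only at hmn
      rw [← Finset.sum_mul]
      congr 1
      have h1 : ((a + b).choose a : k) = ((m + n).choose a : k) := by rw [hmn]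
      rw [h1, Nat.add_choose_eq]
      push_cast
      rfl
    · rintro ⟨⟨m, n⟩, ⟨i, j⟩⟩ _ hne
      by_contra hc
      apply hne
      dsimp only at hc ⊢
      rcases not_and_or.mp hc with h | h
      · rw [Nat.choose_eq_zero_of_lt (by omega)]
        push_cast
        ring
      · rw [Nat.choose_eq_zero_of_lt (show n < j by omega)]
        push_cast
        ring
  rw [LHS]
  refine (Finset.sum_nbij' (fun x => ((x.1.1 + x.2.1, x.1.2 + x.2.2), (x.1.1, x.1.2)))
    (fun y => ((y.2.1, y.2.2), (y.1.1 - y.2.1, y.1.2 - y.2.2))) ?_ ?_ ?_ ?_ ?_).symm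
  · rintro ⟨⟨pa, pb⟩, ⟨qa, qb⟩⟩ hx
    simp only [Finset.mem_product, Finset.HasAntidiagonal.mem_antidiagonal] at hx
    simp only [Finset.mem_filter, Finset.mem_product, Finset.HasAntidiagonal.mem_antidiagonal]
    omega
  · rintro ⟨⟨m, n⟩, ⟨i, j⟩⟩ hy
    simp only [Finset.mem_filter, Finset.mem_product, Finset.HasAntidiagonal.mem_antidiagonal] at hy
    simp only [Finset.mem_product, Finset.HasAntidiagonal.mem_antidiagonal]
    omega
  · rintro ⟨⟨pa, pb⟩, ⟨qa, qb⟩⟩ hx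
    simp only [Finset.mem_product, Finset.HasAntidiagonal.mem_antidiagonal] at hx
    simp only [Prod.mk.injEq, true_and, and_true]
    omega
  · rintro ⟨⟨m, n⟩, ⟨i, j⟩⟩ hy
    simp only [Finset.mem_filter, Finset.mem_product, Finset.HasAntidiagonal.mem_antidiagonal] at hy
    simp only [Prod.mk.injEq, true_and, and_true]
    omega
  · rintro ⟨⟨pa, pb⟩, ⟨qa, qb⟩⟩ hx
    simp only [substAdd_apply]
    ring

lemma zero_eq_f2 : (0 : Fin 2 →₀ ℕ) = f2 0 0 := by
  ext i; fin_cases i <;> simp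

lemma cc_substX0 (c : PowerSeries k) :
    MvPowerSeries.constantCoeff (σ := Fin 2) (R := k) (substX k 0 c) = PowerSeries.constantCoeff (R := k) c := by
  show substX k 0 c 0 = _
  rw [zero_eq_f2, substX0_apply, if_pos rfl, PowerSeries.coeff_zero_eq_constantCoeff]

lemma cc_substX1 (c : PowerSeries k) :
    MvPowerSeries.constantCoeff (σ := Fin 2) (R := k) (substX k 1 c) = PowerSeries.constantCoeff (R := k) c := by
  show substX k 1 c 0 = _
  rw [zero_eq_f2, substX1_apply, if_pos rfl, PowerSeries.coeff_zero_eq_constantCoeff]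

lemma cc_substAdd (c : PowerSeries k) :
    MvPowerSeries.constantCoeff (σ := Fin 2) (R := k) (substAdd k c) = PowerSeries.constantCoeff (R := k) c := by
  show substAdd k c 0 = _
  rw [zero_eq_f2, substAdd_apply]
  simp [PowerSeries.coeff_zero_eq_constantCoeff]

lemma good_one : GoodGamma k (1 : PowerSeries k) := by
  constructor
  · simp
  · simp [PowerSeries.coeff_one]

lemma coeff_one_mul (f g : PowerSeries k) :
    PowerSeries.coeff (R := k) 1 (f * g) =
      PowerSeries.constantCoeff (R := k) f * PowerSeries.coeff (R := k) 1 g +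
      PowerSeries.coeff (R := k) 1 f * PowerSeries.constantCoeff (R := k) g := by
  rw [PowerSeries.coeff_mul]
  rw [show Finset.HasAntidiagonal.antidiagonal (1:ℕ) = {(0,1),(1,0)} from rfl]
  simp [PowerSeries.coeff_zero_eq_constantCoeff]

lemma good_mul {c c' : PowerSeries k} (hc : GoodGamma k c) (hc' : GoodGamma k c') :
    GoodGamma k (c * c') := by
  constructor
  · rw [map_mul, hc.1, hc'.1, one_mul]
  · rw [coeff_one_mul, hc.1, hc.2, hc'.2, one_mul, zero_mul, add_zero]

lemma good_mul_inv_cancel {c : PowerSeries k} (hc : GoodGamma k c) : c * c⁻¹ = 1 :=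
  PowerSeries.mul_inv_cancel c (by rw [hc.1]; exact one_ne_zero)

lemma good_inv {c : PowerSeries k} (hc : GoodGamma k c) : GoodGamma k c⁻¹ := by
  have h0 : PowerSeries.constantCoeff (R := k) c⁻¹ = 1 := by
    rw [PowerSeries.constantCoeff_inv, hc.1, inv_one]
  constructor
  · exact h0
  · have := congrArg (PowerSeries.coeff (R := k) 1) (good_mul_inv_cancel hc)
    rw [coeff_one_mul, hc.1, hc.2, one_mul, zero_mul, add_zero, PowerSeries.coeff_one] at this
    simpa using this

lemma cc_substAdd_ne {c : PowerSeries k} (hc : GoodGamma k c) :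
    MvPowerSeries.constantCoeff (σ := Fin 2) (R := k) (substAdd k c) ≠ 0 := by
  rw [cc_substAdd, hc.1]; exact one_ne_zero

lemma bC_one : bC k (1 : PowerSeries k) = 1 := by
  unfold bC
  rw [substX0_one, substX1_one, substAdd_one, inv_one, one_mul, one_mul]

lemma bC_mul {c c' : PowerSeries k} (hc : GoodGamma k c) (hc' : GoodGamma k c') :
    bC k (c * c') = bC k c * bC k c' := by
  unfold bC
  rw [substX0_mul, substX1_mul, substAdd_mul, MvPowerSeries.mul_inv_rev]
  ring

lemma cc_bC {c : PowerSeries k} (hc : GoodGamma k c) :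
    MvPowerSeries.constantCoeff (σ := Fin 2) (R := k) (bC k c) = 1 := by
  unfold bC
  rw [map_mul, map_mul, MvPowerSeries.constantCoeff_inv, cc_substX0, cc_substX1, cc_substAdd,
    hc.1, inv_one, one_mul, one_mul]

lemma bC_mul_substAdd {c : PowerSeries k} (hc : GoodGamma k c) :
    bC k c * substAdd k c = substX k 0 c * substX k 1 c := by
  unfold bC
  rw [mul_assoc, MvPowerSeries.inv_mul_cancel _ (cc_substAdd_ne hc), mul_one]

lemma functional_eq {d : PowerSeries k} (hd : GoodGamma k d)
    (F : substX k 0 d * substX k 1 d = substAdd k d) : d = 1 := by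
  ext n
  cases n with
  | zero =>
    rw [PowerSeries.coeff_zero_eq_constantCoeff, hd.1]
    simp
  | succ m =>
    have h0 : (substX k 0 d * substX k 1 d) (f2 m 1) = 0 := by
      rw [coeff_mul_fin2]
      apply Finset.sum_eq_zero
      rintro ⟨⟨pa, pb⟩, ⟨qa, qb⟩⟩ hx
      simp only [Finset.mem_product, Finset.HasAntidiagonal.mem_antidiagonal] at hx
      simp only [substX0_apply, substX1_apply]
      by_cases hqa : qa = 0
      · by_cases hpb : pb = 0
        · have hqb : qb = 1 := by omega
          rw [if_pos hpb, hqb, hd.2, mul_zero]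
        · rw [if_neg hpb, mul_zero]
      · rw [if_neg hqa, zero_mul]
    rw [F] at h0
    rw [substAdd_apply, Nat.choose_succ_self_right] at h0
    rcases mul_eq_zero.mp h0 with h | h
    · exact absurd h (Nat.cast_ne_zero.mpr (Nat.succ_ne_zero m))
    · rw [h, PowerSeries.coeff_one, if_neg (Nat.succ_ne_zero m)]

end Aux

open Aux in
theorem BSet_subgroup_and_injective :
    ((1 : MvPowerSeries (Fin 2) k) ∈ BSet k) ∧
    (∀ x ∈ BSet k, ∀ y ∈ BSet k, x * y ∈ BSet k) ∧
    (∀ x ∈ BSet k, IsUnit x ∧ ∃ y ∈ BSet k, x * y = 1) ∧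
    (∀ c c' : PowerSeries k, GoodGamma k c → GoodGamma k c' → bC k c = bC k c' → c = c') := by
  refine ⟨⟨1, good_one, bC_one.symm⟩, ?_, ?_, ?_⟩
  · rintro x ⟨c, hc, rfl⟩ y ⟨c', hc', rfl⟩
    exact ⟨c * c', good_mul hc hc', (bC_mul hc hc').symm⟩
  · rintro x ⟨c, hc, rfl⟩
    refine ⟨MvPowerSeries.isUnit_iff_constantCoeff.mpr (by rw [cc_bC hc]; exact isUnit_one),
      bC k c⁻¹, ⟨c⁻¹, good_inv hc, rfl⟩, ?_⟩
    rw [← bC_mul hc (good_inv hc), good_mul_inv_cancel hc, bC_one]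
  · intro c c' hc hc' h
    set d := c * c'⁻¹ with hd
    have hd_good : GoodGamma k d := good_mul hc (good_inv hc')
    have hdc : d * c' = c := by
      rw [hd, mul_assoc, mul_comm c'⁻¹ c', good_mul_inv_cancel hc', mul_one]
    have E : substX k 0 c * substX k 1 c * substAdd k c'
        = substX k 0 c' * substX k 1 c' * substAdd k c := by
      calc substX k 0 c * substX k 1 c * substAdd k c'
          = (bC k c * substAdd k c) * substAdd k c' := by rw [bC_mul_substAdd hc]
        _ = (bC k c' * substAdd k c') * substAdd k c := by rw [h]; ring
        _ = substX k 0 c' * substX k 1 c' * substAdd k c := by rw [bC_mul_substAdd hc']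
    have hWne : (substX k 0 c' * substX k 1 c' * substAdd k c' : MvPowerSeries (Fin 2) k) ≠ 0 := by
      intro h0
      have h1 : MvPowerSeries.constantCoeff (σ := Fin 2) (R := k)
          (substX k 0 c' * substX k 1 c' * substAdd k c') = 1 := by
        rw [map_mul, map_mul, cc_substX0, cc_substX1, cc_substAdd, hc'.1]; ring
      rw [h0, map_zero] at h1
      exact zero_ne_one h1
    have F : substX k 0 d * substX k 1 d = substAdd k d := by
      apply mul_right_cancel₀ hWne
      calc substX k 0 d * substX k 1 d * (substX k 0 c' * substX k 1 c' * substAdd k c')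
          = (substX k 0 d * substX k 0 c') * (substX k 1 d * substX k 1 c') * substAdd k c' := by
            ring
        _ = substX k 0 c * substX k 1 c * substAdd k c' := by
            rw [← substX0_mul, ← substX1_mul, hdc]
        _ = substX k 0 c' * substX k 1 c' * substAdd k c := E
        _ = substX k 0 c' * substX k 1 c' * (substAdd k d * substAdd k c') := by
            rw [← substAdd_mul, hdc]
        _ = substAdd k d * (substX k 0 c' * substX k 1 c' * substAdd k c') := by ring
    have hd1 : d = 1 := functional_eq hd_good F
    calc c = d * c' := hdc.symm
      _ = c' := by rw [hd1, one_mul]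


end
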